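/- Let w ≥ 1. The number of bijections g : Fin (w+1) → Fin (w+1) such that the index at which g attains its minimum over {0, …, w−1} differs from the index at which g attains its minimum over {1, …, w} equals 2·w!. Consequently, for a uniformly random permutation g of Fin (w+1), the probability that the two consecutive windows {0, …, w−1} and {1, …, w} have different minimizing indices is exactly 2/(w+1). -/

import Mathlib

open Equiv Finset

lemma card_perm_fixed_val {n : ℕ} (a b : Fin (n + 1)) :
    (Finset.univ.filter (fun g : Equiv.Perm (Fin (n + 1)) => g a = b)).card
      = Nat.factorial n := by
  rw [← Fintype.card_subtype]
  have e1 : {g : Equiv.Perm (Fin (n + 1)) // g a = b}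
      ≃ {g : Equiv.Perm (Fin (n + 1)) // g 0 = b} :=
    Equiv.subtypeEquiv (Equiv.mulRight (Equiv.swap 0 a)) (by
      intro g
      simp [Equiv.Perm.mul_apply, Equiv.swap_apply_left])
  have e2 : {g : Equiv.Perm (Fin (n + 1)) // g 0 = b}
      ≃ Equiv.Perm (Fin n) := by
    refine ⟨fun g => (Equiv.Perm.decomposeFin g.1).2, fun e => ⟨Equiv.Perm.decomposeFin.symm (b, e), by
      simp [Equiv.Perm.decomposeFin_symm_apply_zero]⟩, ?_, ?_⟩
    · rintro ⟨g, hg⟩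
      apply Subtype.ext
      show Equiv.Perm.decomposeFin.symm (b, (Equiv.Perm.decomposeFin g).2) = g
      have : Equiv.Perm.decomposeFin g = (b, (Equiv.Perm.decomposeFin g).2) := by
        have h1 : (Equiv.Perm.decomposeFin g).1 = g 0 := by
          conv_rhs => rw [← Equiv.Perm.decomposeFin.symm_apply_apply g]
          rw [← Equiv.Perm.decomposeFin_symm_apply_zero (Equiv.Perm.decomposeFin g).1
            (Equiv.Perm.decomposeFin g).2]
        rw [Prod.ext_iff]
        exact ⟨h1.trans hg, rfl⟩
      conv_rhs => rw [← Equiv.Perm.decomposeFin.symm_apply_apply g, this]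
    · intro e
      simp
  rw [Fintype.card_congr (e1.trans e2), Fintype.card_perm, Fintype.card_fin]

theorem random_minimizer_charged_count (w : ℕ) (hw : 1 ≤ w) :
    (Finset.univ.filter (fun g : Equiv.Perm (Fin (w + 1)) =>
          ∃ A B : Fin (w + 1),
            ((A : ℕ) < w ∧ ∀ x : Fin (w + 1), (x : ℕ) < w → g A ≤ g x) ∧
              (1 ≤ (B : ℕ) ∧ ∀ x : Fin (w + 1), 1 ≤ (x : ℕ) → g B ≤ g x) ∧ A ≠ B)).card
        = 2 * Nat.factorial w ∧
      ((Finset.univ.filter (fun g : Equiv.Perm (Fin (w + 1)) =>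
          ∃ A B : Fin (w + 1),
            ((A : ℕ) < w ∧ ∀ x : Fin (w + 1), (x : ℕ) < w → g A ≤ g x) ∧
              (1 ≤ (B : ℕ) ∧ ∀ x : Fin (w + 1), 1 ≤ (x : ℕ) → g B ≤ g x) ∧ A ≠ B)).card : ℚ)
          / Nat.factorial (w + 1) = 2 / (w + 1) := by
  set last : Fin (w + 1) := Fin.last w with hlast
  have hlastv : (last : ℕ) = w := rfl
  have h0ne : (0 : Fin (w + 1)) ≠ last := by
    intro h
    have := congrArg (Fin.val) h
    simp [hlastv] at this
    omega
  -- condition equivalence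
  have key : ∀ g : Equiv.Perm (Fin (w + 1)),
      ((∃ A B : Fin (w + 1),
            ((A : ℕ) < w ∧ ∀ x : Fin (w + 1), (x : ℕ) < w → g A ≤ g x) ∧
              (1 ≤ (B : ℕ) ∧ ∀ x : Fin (w + 1), 1 ≤ (x : ℕ) → g B ≤ g x) ∧ A ≠ B))
        ↔ (g 0 = 0 ∨ g last = 0) := by
    intro g
    constructor
    · rintro ⟨A, B, ⟨hA, hAm⟩, ⟨hB, hBm⟩, hAB⟩
      set p : Fin (w + 1) := g.symm 0 with hp
      have hgp : g p = 0 := g.apply_symm_apply 0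
      by_cases h1 : 1 ≤ (p : ℕ) ∧ (p : ℕ) < w
      · exfalso
        have hA0 : g A = 0 := le_antisymm (by simpa [hgp] using hAm p h1.2) (Fin.zero_le _)
        have hB0 : g B = 0 := le_antisymm (by simpa [hgp] using hBm p h1.1) (Fin.zero_le _)
        exact hAB (g.injective (hA0.trans hB0.symm))
      · have hple : (p : ℕ) ≤ w := Nat.lt_succ_iff.mp p.isLt
        have : (p : ℕ) = 0 ∨ (p : ℕ) = w := by omega
        rcases this with h | h
        · left
          have : p = 0 := Fin.ext h
          rwa [this] at hgp
        · right
          have : p = last := Fin.ext (h.trans hlastv.symm)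
          rwa [this] at hgp
    · intro h
      rcases h with h | h
      · -- A = 0, B = argmin of window 2
        have hne : (Finset.univ.filter (fun x : Fin (w + 1) => 1 ≤ (x : ℕ))).Nonempty := by
          refine ⟨last, ?_⟩
          simp [hlastv, hw]
        obtain ⟨B, hBmem, hBmin⟩ := Finset.exists_min_image _ g hne
        simp only [Finset.mem_filter, Finset.mem_univ, true_and] at hBmem
        refine ⟨0, B, ⟨by simp; omega, fun x _ => by simp [h, Fin.zero_le]⟩,
          ⟨hBmem, fun x hx => hBmin x (by simp [hx])⟩, ?_⟩
        intro hEq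
        rw [← hEq] at hBmem
        simp at hBmem
      · -- B = last, A = argmin of window 1
        have hne : (Finset.univ.filter (fun x : Fin (w + 1) => (x : ℕ) < w)).Nonempty := by
          refine ⟨0, ?_⟩
          simp only [Finset.mem_filter, Finset.mem_univ, true_and]
          omega
        obtain ⟨A, hAmem, hAmin⟩ := Finset.exists_min_image _ g hne
        simp only [Finset.mem_filter, Finset.mem_univ, true_and] at hAmem
        refine ⟨A, last, ⟨hAmem, fun x hx => hAmin x (by simp [hx])⟩,
          ⟨by simp [hlastv]; omega, fun x _ => by simp [h, Fin.zero_le]⟩, ?_⟩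
        intro hEq
        rw [hEq, hlastv] at hAmem
        omega
  have hfilter : (Finset.univ.filter (fun g : Equiv.Perm (Fin (w + 1)) =>
          ∃ A B : Fin (w + 1),
            ((A : ℕ) < w ∧ ∀ x : Fin (w + 1), (x : ℕ) < w → g A ≤ g x) ∧
              (1 ≤ (B : ℕ) ∧ ∀ x : Fin (w + 1), 1 ≤ (x : ℕ) → g B ≤ g x) ∧ A ≠ B))
      = (Finset.univ.filter (fun g : Equiv.Perm (Fin (w + 1)) => g 0 = 0))
        ∪ (Finset.univ.filter (fun g : Equiv.Perm (Fin (w + 1)) => g last = 0)) := by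
    rw [← Finset.filter_or]
    exact Finset.filter_congr (fun g _ => by rw [key g])
  have hdisj : Disjoint (Finset.univ.filter (fun g : Equiv.Perm (Fin (w + 1)) => g 0 = 0))
      (Finset.univ.filter (fun g : Equiv.Perm (Fin (w + 1)) => g last = 0)) := by
    rw [Finset.disjoint_left]
    intro g hg1 hg2
    simp only [Finset.mem_filter, Finset.mem_univ, true_and] at hg1 hg2
    exact h0ne (g.injective (hg1.trans hg2.symm))
  have hcard : (Finset.univ.filter (fun g : Equiv.Perm (Fin (w + 1)) =>
          ∃ A B : Fin (w + 1),
            ((A : ℕ) < w ∧ ∀ x : Fin (w + 1), (x : ℕ) < w → g A ≤ g x) ∧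
              (1 ≤ (B : ℕ) ∧ ∀ x : Fin (w + 1), 1 ≤ (x : ℕ) → g B ≤ g x) ∧ A ≠ B)).card
      = 2 * Nat.factorial w := by
    rw [hfilter, Finset.card_union_of_disjoint hdisj, card_perm_fixed_val, card_perm_fixed_val]
    ring
  refine ⟨hcard, ?_⟩
  rw [hcard]
  rw [Nat.factorial_succ]
  push_cast
  rw [div_eq_div_iff]
  · ring
  · positivity
  · positivity
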